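/- Let $I \subseteq S$ be a monomial ideal. If $I$ has linear quotients (with respect to some ordering of its minimal monomial generators), then the expansion $I^*$ also has linear quotients. -/

import Mathlib

open MvPolynomial

/-- The monomial ideal of `S = K[x_1,…,x_n]` generated by the monomials `x^a`, `a ∈ A`. -/
noncomputable def monIdeal (K : Type*) [Field K] {n : ℕ} (A : Set (Fin n → ℕ)) :
    Ideal (MvPolynomial (Fin n) K) :=
  Ideal.span ((fun a => ∏ j, (X j : MvPolynomial (Fin n) K) ^ a j) '' A)

/-- The expansion `I^* = ∑_{a ∈ A} P_1^{a(1)} ⋯ P_n^{a(n)} ⊆ S^*` of the monomial ideal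
generated by the monomials `x^a`, `a ∈ A`, with respect to the tuple `(i_1,…,i_n)`;
here `P_j = (x_{j1},…,x_{j i_j})`. -/
noncomputable def expIdeal (K : Type*) [Field K] {n : ℕ} (iv : Fin n → ℕ)
    (A : Set (Fin n → ℕ)) : Ideal (MvPolynomial ((j : Fin n) × Fin (iv j)) K) :=
  ⨆ a ∈ A, ∏ j, (Ideal.span (Set.range fun k : Fin (iv j) =>
      (X ⟨j, k⟩ : MvPolynomial ((j : Fin n) × Fin (iv j)) K))) ^ a j

/-- The `K`-algebra homomorphism `π : S^* → S`, `x_{jk} ↦ x_j`. -/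
noncomputable def piHom (K : Type*) [Field K] {n : ℕ} (iv : Fin n → ℕ) :
    MvPolynomial ((j : Fin n) × Fin (iv j)) K →ₐ[K] MvPolynomial (Fin n) K :=
  aeval fun p => X p.1

/-- A monomial ideal `J` has linear quotients: there is an ordering `u_1,…,u_m` of monomial
generators of `J` such that each colon ideal `(u_1,…,u_{l-1}) : u_l` is generated by
variables. -/
def HasLinearQuotients {K : Type*} [Field K] {σ : Type*}
    (J : Ideal (MvPolynomial σ K)) : Prop :=
  ∃ (m : ℕ) (u : Fin m → MvPolynomial σ K),
    (∀ l, ∃ a : σ →₀ ℕ, u l = monomial a 1) ∧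
    J = Ideal.span (Set.range u) ∧
    ∀ l : Fin m, ∃ V : Set σ,
      Submodule.colon (Ideal.span (u '' {l' | l' < l})) (Ideal.span {u l})
        = Ideal.span ((fun j => (X j : MvPolynomial σ K)) '' V)


namespace ExpProof

variable {n : ℕ} {iv : Fin n → ℕ}

lemma sig_eq_of_val {v w : (j : Fin n) × Fin (iv j)} (h1 : (v.1 : ℕ) = w.1)
    (h2 : (v.2 : ℕ) = w.2) : v = w := by
  rcases v with ⟨j, k⟩; rcases w with ⟨j', k'⟩
  have hj : j = j' := Fin.val_injective h1
  subst hj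
  have hk : k = k' := Fin.val_injective h2
  subst hk; rfl

/-- rank of a variable: a lexicographic encoding into `ℕ`. -/
def rank (iv : Fin n → ℕ) (v : (j : Fin n) × Fin (iv j)) : ℕ :=
  (v.1 : ℕ) * (Finset.univ.sup iv) + (v.2 : ℕ)

lemma snd_lt_sup (v : (j : Fin n) × Fin (iv j)) : (v.2 : ℕ) < Finset.univ.sup iv :=
  lt_of_lt_of_le v.2.isLt (Finset.le_sup (Finset.mem_univ v.1))

lemma rank_lt_iff {v w : (j : Fin n) × Fin (iv j)} :
    rank iv v < rank iv w ↔ ((v.1 : ℕ) < (w.1 : ℕ) ∨ (v.1 = w.1 ∧ (v.2 : ℕ) < (w.2 : ℕ))) := by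
  have hv := snd_lt_sup v
  have hw := snd_lt_sup w
  unfold rank
  constructor
  · intro h
    rcases lt_trichotomy ((v.1 : ℕ)) ((w.1 : ℕ)) with h1 | h1 | h1
    · exact Or.inl h1
    · rw [h1] at h
      exact Or.inr ⟨Fin.val_injective h1, by omega⟩
    · exfalso
      have hle : ((w.1 : ℕ) + 1) * (Finset.univ.sup iv) ≤ (v.1 : ℕ) * (Finset.univ.sup iv) :=
        Nat.mul_le_mul_right _ h1
      rw [add_mul, one_mul] at hle
      omega
  · rintro (h1 | ⟨h1, h2⟩)
    · have hle : ((v.1 : ℕ) + 1) * (Finset.univ.sup iv) ≤ (w.1 : ℕ) * (Finset.univ.sup iv) :=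
        Nat.mul_le_mul_right _ h1
      rw [add_mul, one_mul] at hle
      omega
    · have h1' : (v.1 : ℕ) = (w.1 : ℕ) := by rw [h1]
      rw [h1']
      omega

lemma rank_injective : Function.Injective (rank iv) := by
  intro v w h
  by_contra hne
  rcases lt_trichotomy ((v.1 : ℕ)) ((w.1 : ℕ)) with h1 | h1 | h1
  · have := rank_lt_iff.mpr (Or.inl h1); omega
  · have h1' : v.1 = w.1 := Fin.val_injective h1
    rcases lt_trichotomy ((v.2 : ℕ)) ((w.2 : ℕ)) with h2 | h2 | h2
    · have := rank_lt_iff.mpr (Or.inr ⟨h1', h2⟩); omega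
    · exact hne (sig_eq_of_val h1 h2)
    · have := rank_lt_iff.mpr (Or.inr ⟨h1'.symm, h2⟩); omega
  · have := rank_lt_iff.mpr (Or.inl h1); omega

/-- lexicographic strict order on exponent vectors, via `rank`. -/
def flex (iv : Fin n → ℕ) (c d : ((j : Fin n) × Fin (iv j)) →₀ ℕ) : Prop :=
  ∃ v, (∀ w, rank iv w < rank iv v → c w = d w) ∧ c v < d v

lemma flex_irrefl (c : ((j : Fin n) × Fin (iv j)) →₀ ℕ) : ¬ flex iv c c := by
  rintro ⟨v, -, hv⟩; omega

lemma flex_trans {c d e : ((j : Fin n) × Fin (iv j)) →₀ ℕ}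
    (h1 : flex iv c d) (h2 : flex iv d e) : flex iv c e := by
  obtain ⟨v1, hp1, hv1⟩ := h1
  obtain ⟨v2, hp2, hv2⟩ := h2
  rcases lt_trichotomy (rank iv v1) (rank iv v2) with h | h | h
  · exact ⟨v1, fun w hw => (hp1 w hw).trans (hp2 w (hw.trans h)),
      lt_of_lt_of_le hv1 (le_of_eq (hp2 v1 h))⟩
  · have : v1 = v2 := rank_injective h
    subst this
    exact ⟨v1, fun w hw => (hp1 w hw).trans (hp2 w hw), hv1.trans hv2⟩
  · exact ⟨v2, fun w hw => (hp1 w (hw.trans h)).trans (hp2 w hw),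
      lt_of_le_of_lt (le_of_eq (hp1 v2 h)) hv2⟩

lemma flex_asymm {c d : ((j : Fin n) × Fin (iv j)) →₀ ℕ}
    (h1 : flex iv c d) (h2 : flex iv d c) : False :=
  flex_irrefl c (flex_trans h1 h2)

lemma flex_total {c d : ((j : Fin n) × Fin (iv j)) →₀ ℕ} (h : c ≠ d) :
    flex iv c d ∨ flex iv d c := by
  have hne : ∃ v, c v ≠ d v := by
    by_contra hc
    push_neg at hc
    exact h (Finsupp.ext hc)
  classical
  set D : Finset ((j : Fin n) × Fin (iv j)) :=
    Finset.univ.filter (fun v => c v ≠ d v) with hD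
  have hDne : D.Nonempty := by
    obtain ⟨v, hv⟩ := hne
    exact ⟨v, by simp [hD, hv]⟩
  obtain ⟨v₀, hv₀D, hmin⟩ := D.exists_min_image (rank iv) hDne
  have hpre : ∀ w, rank iv w < rank iv v₀ → c w = d w := by
    intro w hw
    by_contra hcw
    have : w ∈ D := by simp [hD, hcw]
    exact absurd (hmin w this) (by omega)
  have hv₀ : c v₀ ≠ d v₀ := by simpa [hD] using hv₀D
  rcases lt_or_gt_of_ne hv₀ with h' | h'
  · exact Or.inl ⟨v₀, hpre, h'⟩
  · exact Or.inr ⟨v₀, fun w hw => (hpre w hw).symm, h'⟩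

/-- the `j`-marginal of an exponent vector. -/
def marg (iv : Fin n → ℕ) (c : ((j : Fin n) × Fin (iv j)) →₀ ℕ) (j : Fin n) : ℕ :=
  ∑ k : Fin (iv j), c ⟨j, k⟩

lemma marg_add (c d : ((j : Fin n) × Fin (iv j)) →₀ ℕ) (j : Fin n) :
    marg iv (c + d) j = marg iv c j + marg iv d j := by
  simp [marg, Finset.sum_add_distrib]

lemma marg_single (v : (j : Fin n) × Fin (iv j)) (e : ℕ) (j : Fin n) :
    marg iv (Finsupp.single v e) j = if v.1 = j then e else 0 := by
  rcases v with ⟨j', k'⟩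
  unfold marg
  split_ifs with h
  · subst h
    rw [Finset.sum_eq_single k']
    · simp
    · intro k _ hk
      rw [Finsupp.single_apply, if_neg]
      intro hc
      exact hk ((Sigma.mk.inj_iff.mp hc.symm).2.symm.eq).symm
    · simp
  · apply Finset.sum_eq_zero
    intro k _
    rw [Finsupp.single_apply, if_neg]
    intro hc
    exact h (congrArg Sigma.fst hc)

lemma single_le_of_pos {c : ((j : Fin n) × Fin (iv j)) →₀ ℕ}
    {v : (j : Fin n) × Fin (iv j)} (h : 0 < c v) : Finsupp.single v 1 ≤ c := by
  rw [Finsupp.le_def]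
  intro w
  rw [Finsupp.single_apply]
  split_ifs with hw
  · subst hw; exact h
  · exact Nat.zero_le _

lemma le_marg (c : ((j : Fin n) × Fin (iv j)) →₀ ℕ) (v : (j : Fin n) × Fin (iv j)) :
    c v ≤ marg iv c v.1 := by
  rcases v with ⟨j, k⟩
  exact Finset.single_le_sum (f := fun k => c ⟨j, k⟩) (fun _ _ => Nat.zero_le _)
    (Finset.mem_univ k)

lemma exists_le_sum {N : ℕ} (g : Fin N → ℕ) (t : ℕ) (ht : t ≤ ∑ k, g k) :
    ∃ d : Fin N → ℕ, (∀ k, d k ≤ g k) ∧ ∑ k, d k = t := by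
  induction t with
  | zero => exact ⟨0, fun k => Nat.zero_le _, by simp⟩
  | succ t ih =>
    obtain ⟨d, hd, hsum⟩ := ih (Nat.le_of_succ_le ht)
    have : ∃ k, d k < g k := by
      by_contra hc
      push_neg at hc
      have : ∑ k, g k ≤ ∑ k, d k := Finset.sum_le_sum fun k _ => hc k
      omega
    obtain ⟨k, hk⟩ := this
    refine ⟨Function.update d k (d k + 1), ?_, ?_⟩
    · intro k'
      rcases eq_or_ne k' k with rfl | hne
      · simpa using hk
      · simp [Function.update_of_ne hne, hd k']
    · rw [Finset.sum_update_of_mem (Finset.mem_univ k), Finset.sdiff_singleton_eq_erase]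
      have h2 := Finset.add_sum_erase Finset.univ d (Finset.mem_univ k)
      omega

lemma exists_le_marg (c : ((j : Fin n) × Fin (iv j)) →₀ ℕ) (t : Fin n → ℕ)
    (ht : ∀ j, t j ≤ marg iv c j) :
    ∃ d : ((j : Fin n) × Fin (iv j)) →₀ ℕ, d ≤ c ∧ ∀ j, marg iv d j = t j := by
  have H : ∀ j : Fin n, ∃ dj : Fin (iv j) → ℕ, (∀ k, dj k ≤ c ⟨j, k⟩) ∧ ∑ k, dj k = t j :=
    fun j => exists_le_sum (fun k => c ⟨j, k⟩) (t j) (ht j)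
  choose dj hdj hsumdj using H
  refine ⟨Finsupp.equivFunOnFinite.symm (fun v => dj v.1 v.2), ?_, ?_⟩
  · rw [Finsupp.le_def]
    intro v
    simpa using hdj v.1 v.2
  · intro j
    unfold marg
    simpa using hsumdj j

section Ideals

variable (K : Type*) [Field K]

lemma mono_mul {σ₁ : Type*} (c d : σ₁ →₀ ℕ) :
    (monomial c (1:K)) * monomial d 1 = monomial (c + d) 1 := by
  rw [monomial_mul, one_mul]

lemma dvd_mem {σ₁ : Type*} {J : Ideal (MvPolynomial σ₁ K)} {c d : σ₁ →₀ ℕ}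
    (h : monomial d (1:K) ∈ J) (hdc : d ≤ c) : monomial c (1:K) ∈ J := by
  have : monomial c (1:K) = monomial (c - d) 1 * monomial d 1 := by
    rw [mono_mul, tsub_add_cancel_of_le hdc]
  rw [this]
  exact J.mul_mem_left _ h

/-- exponents supported in block `j` with `j`-marginal `e`. -/
def blockSet (iv : Fin n → ℕ) (j : Fin n) (e : ℕ) : Set (((j : Fin n) × Fin (iv j)) →₀ ℕ) :=
  {c | (∀ v, c v ≠ 0 → v.1 = j) ∧ marg iv c j = e}

lemma marg_eq_zero_of_support {c : ((j : Fin n) × Fin (iv j)) →₀ ℕ} {T : Set (Fin n)}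
    (hsup : ∀ v, c v ≠ 0 → v.1 ∈ T) {j : Fin n} (hj : j ∉ T) : marg iv c j = 0 := by
  apply Finset.sum_eq_zero
  intro k _
  by_contra hc
  exact hj (hsup ⟨j, k⟩ hc)

lemma span_block_pow (j : Fin n) (e : ℕ) :
    (Ideal.span (Set.range fun k : Fin (iv j) =>
        (X ⟨j, k⟩ : MvPolynomial ((j : Fin n) × Fin (iv j)) K))) ^ e
      = Ideal.span ((fun c => monomial c (1:K)) '' blockSet iv j e) := by
  induction e with
  | zero =>
    rw [pow_zero, Ideal.one_eq_top]
    have hset : blockSet iv j 0 = {0} := by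
      ext c
      constructor
      · rintro ⟨hsup, hm⟩
        have : ∀ v, c v = 0 := by
          intro v
          by_contra hc
          have h1 := hsup v hc
          have h2 := le_marg c v
          rw [h1, hm] at h2
          omega
        exact Finsupp.ext this
      · rintro rfl
        exact ⟨fun v hv => absurd rfl hv, by simp [marg]⟩
    rw [hset, Set.image_singleton]
    rw [monomial_zero', C_1, Ideal.span_singleton_one]
  | succ e ih =>
    rw [pow_succ, ih]
    apply le_antisymm
    · rw [Ideal.span_mul_span', Ideal.span_le]
      rintro x hx
      rw [Set.mem_mul] at hx
      obtain ⟨y, hy, z, hz, rfl⟩ := hx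
      obtain ⟨c, ⟨hsup, hm⟩, rfl⟩ := hy
      obtain ⟨k, rfl⟩ := hz
      beta_reduce
      have hX : (X ⟨j, k⟩ : MvPolynomial ((j : Fin n) × Fin (iv j)) K)
          = monomial (Finsupp.single ⟨j, k⟩ 1) 1 := rfl
      rw [hX, mono_mul]
      apply Ideal.subset_span
      refine ⟨_, ⟨?_, ?_⟩, rfl⟩
      · intro v hv
        have hsplit : c v ≠ 0 ∨ Finsupp.single (⟨j, k⟩ : (j : Fin n) × Fin (iv j)) 1 v ≠ 0 := by
          by_contra hcon
          push_neg at hcon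
          apply hv
          rw [Finsupp.add_apply, hcon.1, hcon.2]
        rcases hsplit with h | h
        · exact hsup v h
        · rw [Finsupp.single_apply_ne_zero] at h
          rw [h.1]
      · rw [marg_add, hm, marg_single, if_pos rfl]
    · rw [Ideal.span_le]
      rintro x ⟨c, ⟨hsup, hm⟩, rfl⟩
      beta_reduce
      have hk : ∃ k, c ⟨j, k⟩ ≠ 0 := by
        by_contra hc
        push_neg at hc
        have : marg iv c j = 0 := Finset.sum_eq_zero fun k _ => hc k
        omega
      obtain ⟨k, hk⟩ := hk
      have hle : Finsupp.single (⟨j, k⟩ : (j : Fin n) × Fin (iv j)) 1 ≤ c :=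
        single_le_of_pos (Nat.pos_of_ne_zero hk)
      have hc : c = (c - Finsupp.single ⟨j, k⟩ 1) + Finsupp.single ⟨j, k⟩ 1 :=
        (tsub_add_cancel_of_le hle).symm
      have hX : (X ⟨j, k⟩ : MvPolynomial ((j : Fin n) × Fin (iv j)) K)
          = monomial (Finsupp.single ⟨j, k⟩ 1) 1 := rfl
      have heq : monomial c (1:K)
          = monomial (c - Finsupp.single ⟨j, k⟩ 1) 1 * X ⟨j, k⟩ := by
        rw [hX, mono_mul, ← hc]
      rw [heq]
      refine Ideal.mul_mem_mul (Ideal.subset_span ⟨_, ⟨?_, ?_⟩, rfl⟩)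
        (Ideal.subset_span ⟨k, rfl⟩)
      · intro v hv
        apply hsup v
        intro hcv
        rw [Finsupp.tsub_apply, hcv] at hv
        simp at hv
      · have := congrArg (fun c => marg iv c j) hc.symm
        simp [marg_add, marg_single] at this
        omega

/-- exponents supported in blocks from `s` with prescribed marginals on `s`. -/
def multiSet (iv : Fin n → ℕ) (s : Finset (Fin n)) (e : Fin n → ℕ) :
    Set (((j : Fin n) × Fin (iv j)) →₀ ℕ) :=
  {c | (∀ v, c v ≠ 0 → v.1 ∈ s) ∧ ∀ j ∈ s, marg iv c j = e j}

lemma span_prod_blocks (s : Finset (Fin n)) (e : Fin n → ℕ) :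
    (∏ j ∈ s, (Ideal.span (Set.range fun k : Fin (iv j) =>
        (X ⟨j, k⟩ : MvPolynomial ((j : Fin n) × Fin (iv j)) K))) ^ (e j))
      = Ideal.span ((fun c => monomial c (1:K)) '' multiSet iv s e) := by
  classical
  induction s using Finset.induction_on with
  | empty =>
    rw [Finset.prod_empty]
    have hset : multiSet iv (∅ : Finset (Fin n)) e = {0} := by
      ext c
      constructor
      · rintro ⟨hsup, -⟩
        exact Finsupp.ext fun v => by
          by_contra hc
          simpa using hsup v hc
      · rintro rfl
        exact ⟨fun v hv => absurd rfl hv, by simp⟩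
    rw [hset, Set.image_singleton, monomial_zero', C_1, Ideal.span_singleton_one,
      Ideal.one_eq_top]
  | insert j₀ s hj₀ ih =>
    rw [Finset.prod_insert hj₀, span_block_pow, ih]
    apply le_antisymm
    · rw [Ideal.span_mul_span', Ideal.span_le]
      rintro x hx
      rw [Set.mem_mul] at hx
      obtain ⟨y, hy, z, hz, rfl⟩ := hx
      obtain ⟨c1, ⟨hsup1, hm1⟩, rfl⟩ := hy
      obtain ⟨c2, ⟨hsup2, hm2⟩, rfl⟩ := hz
      rw [mono_mul]
      apply Ideal.subset_span
      refine ⟨_, ⟨?_, ?_⟩, rfl⟩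
      · intro v hv
        have hsplit : c1 v ≠ 0 ∨ c2 v ≠ 0 := by
          by_contra hcon
          push_neg at hcon
          apply hv
          rw [Finsupp.add_apply, hcon.1, hcon.2]
        rcases hsplit with h | h
        · rw [hsup1 v h]; exact Finset.mem_insert_self _ _
        · exact Finset.mem_insert_of_mem (hsup2 v h)
      · intro j hj
        rcases Finset.mem_insert.mp hj with rfl | hjs
        · rw [marg_add, hm1,
            marg_eq_zero_of_support (T := ↑s) (fun v hv => hsup2 v hv) (by simpa using hj₀)]
          omega
        · have hne : j ≠ j₀ := by rintro rfl; exact hj₀ hjs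
          rw [marg_add, hm2 j hjs,
            marg_eq_zero_of_support (T := ({j₀} : Set (Fin n)))
              (fun v hv => by simp [hsup1 v hv]) (by simpa using hne)]
          omega
    · rw [Ideal.span_le]
      rintro x ⟨c, ⟨hsup, hm⟩, rfl⟩
      beta_reduce
      set c1 := c.filter (fun v => v.1 = j₀) with hc1
      set c2 := c.filter (fun v => ¬ v.1 = j₀) with hc2
      have hsplit : c1 + c2 = c := Finsupp.filter_pos_add_filter_neg c _
      have heq : monomial c (1:K) = monomial c1 1 * monomial c2 1 := by
        rw [mono_mul, hsplit]
      rw [heq]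
      refine Ideal.mul_mem_mul (Ideal.subset_span ⟨c1, ⟨?_, ?_⟩, rfl⟩)
        (Ideal.subset_span ⟨c2, ⟨?_, ?_⟩, rfl⟩)
      · intro v hv
        by_contra hne
        rw [Finsupp.filter_apply_neg (fun v => v.1 = j₀) c hne] at hv
        exact hv rfl
      · have : ∀ k : Fin (iv j₀), c1 ⟨j₀, k⟩ = c ⟨j₀, k⟩ := fun k =>
          Finsupp.filter_apply_pos _ _ rfl
        unfold marg
        rw [Finset.sum_congr rfl fun k _ => this k]
        exact hm j₀ (Finset.mem_insert_self _ _)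
      · intro v hv
        have hvne : v.1 ≠ j₀ := by
          by_contra hne
          rw [Finsupp.filter_apply_neg (fun v => ¬ v.1 = j₀) c (by simpa using hne)] at hv
          exact hv rfl
        have hcv : c v ≠ 0 := by
          rw [Finsupp.filter_apply_pos (fun v => ¬ v.1 = j₀) c hvne] at hv
          exact hv
        rcases Finset.mem_insert.mp (hsup v hcv) with h | h
        · exact absurd h hvne
        · exact h
      · intro j hj
        have hjne : j ≠ j₀ := by rintro rfl; exact hj₀ hj
        have : ∀ k : Fin (iv j), c2 ⟨j, k⟩ = c ⟨j, k⟩ := fun k =>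
          Finsupp.filter_apply_pos (fun v => ¬ v.1 = j₀) c (by simpa using hjne)
        unfold marg
        rw [Finset.sum_congr rfl fun k _ => this k]
        exact hm j (Finset.mem_insert_of_mem hj)

lemma span_prodPow (e : Fin n → ℕ) :
    (∏ j, (Ideal.span (Set.range fun k : Fin (iv j) =>
        (X ⟨j, k⟩ : MvPolynomial ((j : Fin n) × Fin (iv j)) K))) ^ (e j))
      = Ideal.span ((fun c => monomial c (1:K)) '' {c | ∀ j, marg iv c j = e j}) := by
  rw [span_prod_blocks]
  congr 1
  apply congrArg
  ext c
  simp [multiSet]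

end Ideals

section Expansion

variable (K : Type*) [Field K]

lemma prod_X_pow (a : Fin n → ℕ) :
    (∏ j, (X j : MvPolynomial (Fin n) K) ^ a j)
      = monomial (Finsupp.equivFunOnFinite.symm a) (1:K) := by
  rw [← prod_X_pow_eq_monomial]
  rw [← Finset.prod_subset (Finset.subset_univ ((Finsupp.equivFunOnFinite.symm a).support))
    (fun x _ hx => by
      have h0 : a x = 0 := by simpa using Finsupp.notMem_support_iff.mp hx
      rw [h0, pow_zero])]
  apply Finset.prod_congr rfl
  intro j _
  simp

lemma monIdeal_eq (A : Set (Fin n → ℕ)) :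
    monIdeal K A = Ideal.span ((fun c => monomial c (1:K)) ''
      (Finsupp.equivFunOnFinite.symm '' A)) := by
  unfold monIdeal
  rw [Set.image_image]
  congr 1
  apply Set.image_congr
  intro a _
  exact prod_X_pow K a

/-- the exponents of the natural generators of the expansion. -/
def GSet (iv : Fin n → ℕ) {m : ℕ} (α : Fin m → (Fin n →₀ ℕ)) :
    Set (((j : Fin n) × Fin (iv j)) →₀ ℕ) :=
  {c | ∃ l, ∀ j, marg iv c j = α l j}

lemma hA1_of_span {A : Set (Fin n → ℕ)} {m : ℕ} {α : Fin m → (Fin n →₀ ℕ)}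
    (hspan : monIdeal K A = Ideal.span (Set.range fun l => monomial (α l) (1:K))) :
    ∀ a ∈ A, ∃ l, ∀ j, α l j ≤ a j := by
  classical
  intro a ha
  have hmem : monomial (Finsupp.equivFunOnFinite.symm a) (1:K) ∈ monIdeal K A := by
    rw [monIdeal_eq]
    exact Ideal.subset_span ⟨_, ⟨a, ha, rfl⟩, rfl⟩
  rw [hspan] at hmem
  have hr : (Set.range fun l => monomial (α l) (1:K))
      = (fun c => monomial c (1:K)) '' Set.range α := by
    rw [← Set.range_comp]; rfl
  rw [hr, mem_ideal_span_monomial_image] at hmem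
  have hsupp : (Finsupp.equivFunOnFinite.symm a) ∈
      (monomial (Finsupp.equivFunOnFinite.symm a) (1:K)).support := by
    rw [support_monomial, if_neg one_ne_zero]
    exact Finset.mem_singleton_self _
  obtain ⟨si, ⟨l, rfl⟩, hle⟩ := hmem _ hsupp
  exact ⟨l, fun j => by simpa using hle j⟩

lemma hA2_of_span {A : Set (Fin n → ℕ)} {m : ℕ} {α : Fin m → (Fin n →₀ ℕ)}
    (hspan : monIdeal K A = Ideal.span (Set.range fun l => monomial (α l) (1:K))) :
    ∀ l, ∃ a ∈ A, ∀ j, a j ≤ α l j := by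
  classical
  intro l
  have hmem : monomial (α l) (1:K) ∈ monIdeal K A := by
    rw [hspan]
    exact Ideal.subset_span (Set.mem_range_self l)
  rw [monIdeal_eq, mem_ideal_span_monomial_image] at hmem
  have hsupp : α l ∈ (monomial (α l) (1:K)).support := by
    rw [support_monomial, if_neg one_ne_zero]
    exact Finset.mem_singleton_self _
  obtain ⟨si, ⟨a, ha, rfl⟩, hle⟩ := hmem _ hsupp
  exact ⟨a, ha, fun j => by simpa using hle j⟩

lemma expIdeal_eq_span (A : Set (Fin n → ℕ)) {m : ℕ} (α : Fin m → (Fin n →₀ ℕ))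
    (hspan : monIdeal K A = Ideal.span (Set.range fun l => monomial (α l) (1:K))) :
    expIdeal K iv A = Ideal.span ((fun c => monomial c (1:K)) '' GSet iv α) := by
  have hA1 := hA1_of_span K hspan
  have hA2 := hA2_of_span K hspan
  unfold expIdeal
  apply le_antisymm
  · apply iSup₂_le
    intro a ha
    rw [span_prodPow, Ideal.span_le]
    rintro x ⟨c, hc, rfl⟩
    obtain ⟨l, hl⟩ := hA1 a ha
    obtain ⟨d, hdc, hd⟩ := exists_le_marg c (fun j => α l j)
      (fun j => by rw [hc j]; exact hl j)
    exact dvd_mem K (Ideal.subset_span ⟨d, ⟨l, hd⟩, rfl⟩) hdc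
  · rw [Ideal.span_le]
    rintro x ⟨c, ⟨l, hl⟩, rfl⟩
    obtain ⟨a, ha, hle⟩ := hA2 l
    obtain ⟨d, hdc, hd⟩ := exists_le_marg c a
      (fun j => by rw [hl j]; exact hle j)
    have hprod : monomial d (1:K) ∈
        (∏ j, (Ideal.span (Set.range fun k : Fin (iv j) =>
          (X ⟨j, k⟩ : MvPolynomial ((j : Fin n) × Fin (iv j)) K))) ^ a j) := by
      rw [span_prodPow]
      exact Ideal.subset_span ⟨d, hd, rfl⟩
    have hle2 : (∏ j, (Ideal.span (Set.range fun k : Fin (iv j) =>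
          (X ⟨j, k⟩ : MvPolynomial ((j : Fin n) × Fin (iv j)) K))) ^ a j)
        ≤ ⨆ a ∈ A, ∏ j, (Ideal.span (Set.range fun k : Fin (iv j) =>
          (X ⟨j, k⟩ : MvPolynomial ((j : Fin n) × Fin (iv j)) K))) ^ a j :=
      le_iSup₂ (f := fun (a : Fin n → ℕ) (_ : a ∈ A) =>
        ∏ j, (Ideal.span (Set.range fun k : Fin (iv j) =>
          (X ⟨j, k⟩ : MvPolynomial ((j : Fin n) × Fin (iv j)) K))) ^ a j) a ha
    exact dvd_mem K (hle2 hprod) hdc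

end Expansion

section Colon

variable (K : Type*) [Field K]

lemma one_not_mem_span_X {σ₁ : Type*} (V : Set σ₁) :
    (1 : MvPolynomial σ₁ K) ∉ Ideal.span (MvPolynomial.X '' V) := by
  intro h
  have h0 : (0 : σ₁ →₀ ℕ) ∈ (1 : MvPolynomial σ₁ K).support := by
    classical
    have : (1 : MvPolynomial σ₁ K) = monomial 0 1 := by rw [monomial_zero', C_1]
    rw [this, support_monomial, if_neg one_ne_zero]
    exact Finset.mem_singleton_self _
  obtain ⟨v, -, hv⟩ := mem_ideal_span_X_image.mp h 0 h0
  exact hv rfl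

lemma colon_span_monomials {σ₁ : Type*} (E : Set (σ₁ →₀ ℕ)) (c₀ : σ₁ →₀ ℕ)
    (hkey : ∀ d ∈ E, ∃ v, c₀ v < d v ∧ ∃ d' ∈ E, d' ≤ c₀ + Finsupp.single v 1) :
    Submodule.colon (Ideal.span ((fun c => monomial c (1:K)) '' E))
        (Ideal.span {monomial c₀ (1:K)})
      = Ideal.span ((fun v => (X v : MvPolynomial σ₁ K)) ''
          {v | ∃ d' ∈ E, d' ≤ c₀ + Finsupp.single v 1}) := by
  apply le_antisymm
  · intro f hf
    have hf2 : f * monomial c₀ (1:K) ∈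
        Ideal.span ((fun c => monomial c (1:K)) '' E) := by
      have := Submodule.mem_colon.mp hf (monomial c₀ (1:K))
        (Ideal.subset_span (Set.mem_singleton _))
      rwa [smul_eq_mul] at this
    rw [mem_ideal_span_X_image]
    intro e he
    have hsupp : e + c₀ ∈ (f * monomial c₀ (1:K)).support := by
      rw [mem_support_iff, coeff_mul_monomial, mul_one]
      exact mem_support_iff.mp he
    obtain ⟨d, hdE, hdle⟩ := mem_ideal_span_monomial_image.mp hf2 _ hsupp
    obtain ⟨v, hv, hv2⟩ := hkey d hdE
    refine ⟨v, hv2, ?_⟩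
    have h1 : d v ≤ e v + c₀ v := by
      have := hdle v
      rwa [Finsupp.add_apply] at this
    omega
  · rw [Ideal.span_le]
    rintro x ⟨v, hv, rfl⟩
    rw [SetLike.mem_coe, Submodule.mem_colon]
    intro p hp
    obtain ⟨q, rfl⟩ := Ideal.mem_span_singleton.mp hp
    rw [smul_eq_mul, ← mul_assoc]
    have hXv : (X v : MvPolynomial σ₁ K) = monomial (Finsupp.single v 1) 1 := rfl
    have heq : (X v : MvPolynomial σ₁ K) * monomial c₀ 1
        = monomial (c₀ + Finsupp.single v 1) 1 := by
      rw [hXv, mono_mul, add_comm]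
    rw [heq]
    obtain ⟨d', hd'E, hd'le⟩ := hv
    exact Ideal.mul_mem_right q _ (dvd_mem K (Ideal.subset_span ⟨d', hd'E, rfl⟩) hd'le)

/-- the exchange lemma within a fiber. -/
lemma exchange (c d : ((j : Fin n) × Fin (iv j)) →₀ ℕ)
    (hmarg : ∀ j, marg iv c j = marg iv d j) (hlex : flex iv c d) :
    ∃ v, c v < d v ∧ ∃ d'', (∀ j, marg iv d'' j = marg iv c j) ∧ flex iv c d''
      ∧ d'' ≤ c + Finsupp.single v 1 := by
  obtain ⟨v₀, hpre, hv₀⟩ := hlex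
  have hk₁ : ∃ k₁ : Fin (iv v₀.1), rank iv v₀ < rank iv ⟨v₀.1, k₁⟩
      ∧ d ⟨v₀.1, k₁⟩ < c ⟨v₀.1, k₁⟩ := by
    by_contra hcon
    push_neg at hcon
    have hlt : marg iv c v₀.1 < marg iv d v₀.1 := by
      apply Finset.sum_lt_sum
      · intro k _
        rcases lt_trichotomy (rank iv (⟨v₀.1, k⟩ : (j : Fin n) × Fin (iv j))) (rank iv v₀)
          with h | h | h
        · exact le_of_eq (hpre _ h)
        · have : (⟨v₀.1, k⟩ : (j : Fin n) × Fin (iv j)) = v₀ := rank_injective h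
          rw [this]; exact le_of_lt hv₀
        · exact hcon k h
      · refine ⟨v₀.2, Finset.mem_univ _, ?_⟩
        rw [Sigma.eta]
        exact hv₀
    exact absurd (hmarg v₀.1) (by omega)
  obtain ⟨k₁, hrk, hk₁⟩ := hk₁
  set v₁ : (j : Fin n) × Fin (iv j) := ⟨v₀.1, k₁⟩ with hv₁def
  have hne : v₁ ≠ v₀ := by
    intro h
    rw [h] at hrk
    omega
  have hpos : 0 < c v₁ := by omega
  have hble : Finsupp.single v₁ 1 ≤ c := single_le_of_pos hpos
  set b := c - Finsupp.single v₁ 1 with hbdef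
  have hb : b + Finsupp.single v₁ 1 = c := tsub_add_cancel_of_le hble
  refine ⟨v₀, hv₀, b + Finsupp.single v₀ 1, ?_, ?_, ?_⟩
  · intro j
    rw [marg_add, ← hb, marg_add, marg_single, marg_single]
  · refine ⟨v₀, ?_, ?_⟩
    · intro w hw
      have hwv₀ : v₀ ≠ w := by rintro rfl; omega
      have hwv₁ : v₁ ≠ w := by rintro rfl; omega
      rw [Finsupp.add_apply, Finsupp.single_apply, if_neg hwv₀, hbdef,
        Finsupp.tsub_apply, Finsupp.single_apply, if_neg hwv₁]
      omega
    · rw [Finsupp.add_apply, Finsupp.single_apply, if_pos rfl, hbdef,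
        Finsupp.tsub_apply, Finsupp.single_apply, if_neg hne]
      omega
  · rw [Finsupp.le_def]
    intro w
    rw [Finsupp.add_apply, Finsupp.add_apply, hbdef, Finsupp.tsub_apply]
    have := Finsupp.le_def.mp hble w
    omega

end Colon

section Case2

variable (K : Type*) [Field K]

lemma key_case2 {m : ℕ} (α : Fin m → (Fin n →₀ ℕ))
    (hcol : ∀ l : Fin m, ∃ V : Set (Fin n),
      Submodule.colon (Ideal.span ((fun l' => monomial (α l') (1:K)) '' {l' | l' < l}))
          (Ideal.span {monomial (α l) (1:K)})
        = Ideal.span ((fun j => (X j : MvPolynomial (Fin n) K)) '' V))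
    (c d : ((j : Fin n) × Fin (iv j)) →₀ ℕ) (L l₀ : Fin m)
    (hc : ∀ j, marg iv c j = α L j) (hd : ∀ j, marg iv d j = α l₀ j) (hl : l₀ < L) :
    ∃ v, c v < d v ∧ ∃ d'', (∃ l' : Fin m, l' < L ∧ ∀ j, marg iv d'' j = α l' j)
      ∧ d'' ≤ c + Finsupp.single v 1 := by
  classical
  obtain ⟨V, hV⟩ := hcol L
  -- step 1 : x^{β - a} lies in the colon ideal, where β = α l₀, a = α L
  have step1 : monomial (α l₀ - α L) (1:K) ∈
      Submodule.colon (Ideal.span ((fun l' => monomial (α l') (1:K)) '' {l' | l' < L}))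
        (Ideal.span {monomial (α L) (1:K)}) := by
    rw [Submodule.mem_colon]
    intro p hp
    obtain ⟨q, rfl⟩ := Ideal.mem_span_singleton.mp hp
    rw [smul_eq_mul, ← mul_assoc, mono_mul]
    apply Ideal.mul_mem_right
    exact dvd_mem K (Ideal.subset_span ⟨l₀, hl, rfl⟩) le_tsub_add
  rw [hV] at step1
  -- step 2 : β - a ≠ 0
  have step2 : α l₀ - α L ≠ 0 := by
    intro h0
    rw [h0, monomial_zero', C_1] at step1
    exact one_not_mem_span_X K V step1
  -- step 3 : find j ∈ V with a j < β j
  have hsupp : (α l₀ - α L) ∈ (monomial (α l₀ - α L) (1:K)).support := by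
    rw [support_monomial, if_neg one_ne_zero]
    exact Finset.mem_singleton_self _
  obtain ⟨jv, hjvV, hjv⟩ := mem_ideal_span_X_image.mp step1 _ hsupp
  have hjlt : α L jv < α l₀ jv := by
    rw [Finsupp.tsub_apply] at hjv
    omega
  -- step 4 : X jv multiplies x^a into the earlier ideal
  have step4 : monomial (α L + Finsupp.single jv 1) (1:K) ∈
      Ideal.span ((fun l' => monomial (α l') (1:K)) '' {l' | l' < L}) := by
    have hXmem : (X jv : MvPolynomial (Fin n) K) ∈
        Ideal.span ((fun j => (X j : MvPolynomial (Fin n) K)) '' V) :=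
      Ideal.subset_span ⟨jv, hjvV, rfl⟩
    rw [← hV] at hXmem
    have := Submodule.mem_colon.mp hXmem (monomial (α L) (1:K))
      (Ideal.subset_span (Set.mem_singleton _))
    rw [smul_eq_mul] at this
    have heq : (X jv : MvPolynomial (Fin n) K) * monomial (α L) 1
        = monomial (α L + Finsupp.single jv 1) 1 := by
      rw [show (X jv : MvPolynomial (Fin n) K) = monomial (Finsupp.single jv 1) 1 from rfl,
        mono_mul, add_comm]
    rwa [heq] at this
  -- step 5 : extract an earlier generator below a + e_jv
  have himg : ((fun l' => monomial (α l') (1:K)) '' {l' | l' < L})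
      = (fun c => monomial c (1:K)) '' (α '' {l' | l' < L}) := by
    rw [Set.image_image]
  rw [himg, mem_ideal_span_monomial_image] at step4
  have hsupp2 : (α L + Finsupp.single jv 1) ∈
      (monomial (α L + Finsupp.single jv 1) (1:K)).support := by
    rw [support_monomial, if_neg one_ne_zero]
    exact Finset.mem_singleton_self _
  obtain ⟨si, ⟨l', hl'L, rfl⟩, hsile⟩ := step4 _ hsupp2
  -- step 6 : find the variable v in block jv
  have hkex : ∃ k : Fin (iv jv), c ⟨jv, k⟩ < d ⟨jv, k⟩ := by
    by_contra hcon
    push_neg at hcon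
    have : marg iv d jv ≤ marg iv c jv := Finset.sum_le_sum fun k _ => hcon k
    rw [hc, hd] at this
    omega
  obtain ⟨k, hk⟩ := hkex
  -- step 7 : greedily extract d'' below c + e_v with marginal α l'
  obtain ⟨d'', hd''le, hd''⟩ := exists_le_marg (c + Finsupp.single ⟨jv, k⟩ 1) (fun j => α l' j)
    (by
      intro j
      beta_reduce
      rw [marg_add, marg_single,
        show ((⟨jv, k⟩ : (j : Fin n) × Fin (iv j)).1) = jv from rfl, hc]
      have := Finsupp.le_def.mp hsile j
      rw [Finsupp.add_apply, Finsupp.single_apply] at this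
      split_ifs with hj <;> split_ifs at this with hj' <;> omega)
  exact ⟨⟨jv, k⟩, hk, d'', ⟨l', hl'L, hd''⟩, hd''le⟩

end Case2

section Main

def posSet (iv : Fin n → ℕ) {m : ℕ} (α : Fin m → (Fin n →₀ ℕ))
    (c : ((j : Fin n) × Fin (iv j)) →₀ ℕ) : Set ℕ :=
  {l : ℕ | ∃ hl : l < m, ∀ j, marg iv c j = α ⟨l, hl⟩ j}

noncomputable def pos (iv : Fin n → ℕ) {m : ℕ} (α : Fin m → (Fin n →₀ ℕ))
    (c : ((j : Fin n) × Fin (iv j)) →₀ ℕ) : ℕ :=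
  sInf (posSet iv α c)

lemma pos_mem {m : ℕ} {α : Fin m → (Fin n →₀ ℕ)} {c} (hc : c ∈ GSet iv α) :
    pos iv α c ∈ posSet iv α c := by
  apply Nat.sInf_mem
  obtain ⟨l, hl⟩ := hc
  exact ⟨l.1, l.2, hl⟩

lemma pos_le {m : ℕ} {α : Fin m → (Fin n →₀ ℕ)} {c} {l : Fin m}
    (h : ∀ j, marg iv c j = α l j) : pos iv α c ≤ l.1 :=
  Nat.sInf_le ⟨l.2, h⟩

lemma pos_congr {m : ℕ} {α : Fin m → (Fin n →₀ ℕ)} {c d}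
    (h : ∀ j, marg iv c j = marg iv d j) : pos iv α c = pos iv α d := by
  unfold pos posSet
  congr 1
  ext l
  constructor
  · rintro ⟨hl, hj⟩
    exact ⟨hl, fun j => by rw [← h j]; exact hj j⟩
  · rintro ⟨hl, hj⟩
    exact ⟨hl, fun j => by rw [h j]; exact hj j⟩

/-- the ordering of the generators of the expansion. -/
def Rel (iv : Fin n → ℕ) {m : ℕ} (α : Fin m → (Fin n →₀ ℕ))
    (c d : ((j : Fin n) × Fin (iv j)) →₀ ℕ) : Prop :=
  pos iv α c < pos iv α d ∨ (pos iv α c = pos iv α d ∧ (flex iv d c ∨ c = d))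

lemma rel_trans {m : ℕ} {α : Fin m → (Fin n →₀ ℕ)} {c d e}
    (h1 : Rel iv α c d) (h2 : Rel iv α d e) : Rel iv α c e := by
  rcases h1 with h1 | ⟨h1, h1'⟩
  · rcases h2 with h2 | ⟨h2, -⟩
    · exact Or.inl (h1.trans h2)
    · exact Or.inl (h2 ▸ h1)
  · rcases h2 with h2 | ⟨h2, h2'⟩
    · exact Or.inl (h1 ▸ h2)
    · refine Or.inr ⟨h1.trans h2, ?_⟩
      rcases h1' with h1' | rfl
      · rcases h2' with h2' | rfl
        · exact Or.inl (flex_trans h2' h1')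
        · exact Or.inl h1'
      · exact h2'

lemma rel_antisymm {m : ℕ} {α : Fin m → (Fin n →₀ ℕ)} {c d}
    (h1 : Rel iv α c d) (h2 : Rel iv α d c) : c = d := by
  rcases h1 with h1 | ⟨h1, h1'⟩ <;> rcases h2 with h2 | ⟨h2, h2'⟩
  · omega
  · omega
  · omega
  · rcases h1' with h1' | rfl
    · rcases h2' with h2' | rfl
      · exact absurd (flex_trans h1' h2') (flex_irrefl d)
      · rfl
    · rfl

lemma rel_total {m : ℕ} {α : Fin m → (Fin n →₀ ℕ)} (c d) :
    Rel iv α c d ∨ Rel iv α d c := by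
  rcases lt_trichotomy (pos iv α c) (pos iv α d) with h | h | h
  · exact Or.inl (Or.inl h)
  · rcases eq_or_ne c d with rfl | hne
    · exact Or.inl (Or.inr ⟨h, Or.inr rfl⟩)
    · rcases flex_total hne with hf | hf
      · exact Or.inr (Or.inr ⟨h.symm, Or.inl hf⟩)
      · exact Or.inl (Or.inr ⟨h, Or.inl hf⟩)
  · exact Or.inr (Or.inl h)

variable (K : Type*) [Field K]

theorem hlq_span_GSet (m : ℕ) (α : Fin m → (Fin n →₀ ℕ))
    (hcol : ∀ l : Fin m, ∃ V : Set (Fin n),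
      Submodule.colon (Ideal.span ((fun l' => monomial (α l') (1:K)) '' {l' | l' < l}))
          (Ideal.span {monomial (α l) (1:K)})
        = Ideal.span ((fun j => (X j : MvPolynomial (Fin n) K)) '' V)) :
    HasLinearQuotients (Ideal.span ((fun c => monomial c (1:K)) '' GSet iv α)) := by
  classical
  set β₀ : ((j : Fin n) × Fin (iv j)) →₀ ℕ :=
    Finsupp.equivFunOnFinite.symm (fun v => Finset.univ.sup (fun l : Fin m => α l v.1))
    with hβ₀
  have hGb : ∀ c ∈ GSet iv α, c ≤ β₀ := by
    rintro c ⟨l, hl⟩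
    rw [Finsupp.le_def]
    intro v
    have h1 : c v ≤ marg iv c v.1 := le_marg c v
    have h2 : marg iv c v.1 = α l v.1 := hl v.1
    have h3 : α l v.1 ≤ β₀ v := by
      rw [hβ₀]
      simpa using Finset.le_sup (f := fun l : Fin m => α l v.1) (Finset.mem_univ l)
    omega
  set Gfin : Finset (((j : Fin n) × Fin (iv j)) →₀ ℕ) :=
    (Finset.Iic β₀).filter (fun c => c ∈ GSet iv α) with hGfin
  have hGfin_iff : ∀ c, c ∈ Gfin ↔ c ∈ GSet iv α := by
    intro c
    rw [hGfin, Finset.mem_filter, Finset.mem_Iic]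
    exact ⟨fun h => h.2, fun h => ⟨hGb c h, h⟩⟩
  letI : DecidableRel (Rel iv α (m := m)) := Classical.decRel _
  haveI : IsTrans _ (Rel iv α (m := m)) := ⟨fun _ _ _ => rel_trans⟩
  haveI : IsAntisymm _ (Rel iv α (m := m)) := ⟨fun _ _ => rel_antisymm⟩
  haveI : IsTotal _ (Rel iv α (m := m)) := ⟨rel_total⟩
  set Lst := Finset.sort Gfin (Rel iv α) with hLst
  have hsorted : Lst.Pairwise (Rel iv α) := Finset.pairwise_sort _ _
  have hnodup : Lst.Nodup := Finset.sort_nodup _ _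
  have hmemG : ∀ l : Fin Lst.length, Lst.get l ∈ GSet iv α := by
    intro l
    exact (hGfin_iff _).mp ((Finset.mem_sort _).mp (Lst.get_mem _))
  refine ⟨Lst.length, fun l => monomial (Lst.get l) 1, fun l => ⟨Lst.get l, rfl⟩, ?_, ?_⟩
  · have hr : Set.range (fun l => monomial (Lst.get l) (1:K))
        = (fun c => monomial c (1:K)) '' GSet iv α := by
      ext x
      constructor
      · rintro ⟨l, rfl⟩
        exact ⟨Lst.get l, hmemG l, rfl⟩
      · rintro ⟨c, hc, rfl⟩
        have hmem : c ∈ Lst := (Finset.mem_sort _).mpr ((hGfin_iff c).mpr hc)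
        obtain ⟨l, hl⟩ := List.mem_iff_get.mp hmem
        exact ⟨l, show monomial (Lst.get l) 1 = _ by rw [hl]⟩
    rw [hr]
  · intro t
    set E : Set (((j : Fin n) × Fin (iv j)) →₀ ℕ) :=
      (fun l : Fin Lst.length => Lst.get l) '' {s | s < t} with hE
    have himg : (fun l : Fin Lst.length => monomial (Lst.get l) (1:K)) '' {l' | l' < t}
        = (fun c => monomial c (1:K)) '' E := by
      rw [hE, ← Set.image_comp]
      rfl
    -- the index-finding helper
    have hidx : ∀ e, e ∈ GSet iv α →
        (pos iv α e < pos iv α (Lst.get t)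
          ∨ (pos iv α e = pos iv α (Lst.get t) ∧ flex iv (Lst.get t) e)) →
        e ∈ E := by
      intro e heG hcond
      have hmem : e ∈ Lst := (Finset.mem_sort _).mpr ((hGfin_iff e).mpr heG)
      obtain ⟨s', hs'⟩ := List.mem_iff_get.mp hmem
      refine ⟨s', ?_, hs'⟩
      simp only [Set.mem_setOf_eq]
      by_contra hge
      push_neg at hge
      rcases eq_or_lt_of_le hge with heq | hlt
      · subst hs'
        rw [← heq] at hcond
        rcases hcond with h | ⟨-, h⟩
        · omega
        · exact flex_irrefl _ h
      · have hR : Rel iv α (Lst.get t) (Lst.get s') :=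
          List.Pairwise.rel_get_of_lt hsorted hlt
        rw [hs'] at hR
        rcases hR with h | ⟨h, h'⟩
        · rcases hcond with h2 | ⟨h2, -⟩ <;> omega
        · rcases hcond with h2 | ⟨-, h2⟩
          · omega
          · rcases h' with h' | h'
            · exact flex_asymm h2 h'
            · rw [← h'] at h2
              exact flex_irrefl _ h2
    have hkey : ∀ d ∈ E, ∃ v, (Lst.get t) v < d v
        ∧ ∃ d' ∈ E, d' ≤ (Lst.get t) + Finsupp.single v 1 := by
      rintro d ⟨s, hst, rfl⟩
      simp only [Set.mem_setOf_eq] at hst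
      have hsG := hmemG s
      have htG := hmemG t
      have hR : Rel iv α (Lst.get s) (Lst.get t) := List.Pairwise.rel_get_of_lt hsorted hst
      have hne : Lst.get s ≠ Lst.get t := by
        intro h
        have := List.nodup_iff_injective_get.mp hnodup h
        omega
      obtain ⟨hLm, hcL⟩ := pos_mem htG
      obtain ⟨hlm, hcl⟩ := pos_mem hsG
      rcases hR with hR | ⟨hR, hR'⟩
      · -- different fibers : use the colon hypothesis
        obtain ⟨v, hv, d'', ⟨l', hl'L, hd''⟩, hd''le⟩ :=
          key_case2 K α hcol (Lst.get t) (Lst.get s)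
            ⟨pos iv α (Lst.get t), hLm⟩ ⟨pos iv α (Lst.get s), hlm⟩
            hcL hcl (by exact hR)
        have hd''G : d'' ∈ GSet iv α := ⟨l', hd''⟩
        have hd''pos : pos iv α d'' < pos iv α (Lst.get t) := by
          have := pos_le hd''
          have h2 : (l' : ℕ) < pos iv α (Lst.get t) := hl'L
          omega
        exact ⟨v, hv, d'', hidx d'' hd''G (Or.inl hd''pos), hd''le⟩
      · -- same fiber : exchange
        rcases hR' with hflex | heq
        on_goal 2 => exact absurd heq hne
        have hmarg : ∀ j, marg iv (Lst.get t) j = marg iv (Lst.get s) j := by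
          intro j
          rw [hcL, hcl]
          congr 2
          exact Fin.val_injective (by simpa using hR.symm)
        obtain ⟨v, hv, d'', hd''marg, hflex2, hd''le⟩ :=
          exchange (Lst.get t) (Lst.get s) hmarg hflex
        have hd''G : d'' ∈ GSet iv α :=
          ⟨⟨pos iv α (Lst.get t), hLm⟩, fun j => by rw [hd''marg j, hcL]⟩
        exact ⟨v, hv, d'', hidx d'' hd''G
          (Or.inr ⟨pos_congr hd''marg, hflex2⟩), hd''le⟩
    refine ⟨{v | ∃ d' ∈ E, d' ≤ (Lst.get t) + Finsupp.single v 1}, ?_⟩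
    rw [himg]
    exact colon_span_monomials K E (Lst.get t) hkey

end Main

end ExpProof

/-- Proposition 1.5: if `I` has linear quotients, then so does its expansion `I^*`. -/
theorem expIdeal_hasLinearQuotients (K : Type*) [Field K] {n : ℕ} (iv : Fin n → ℕ)
    (hiv : ∀ j, 0 < iv j) (A : Set (Fin n → ℕ))
    (h : HasLinearQuotients (monIdeal K A)) :
    HasLinearQuotients (expIdeal K iv A) := by
  obtain ⟨m, u, hmon, hspan, hcol⟩ := h
  choose α hα using hmon
  have hu : u = fun l => monomial (α l) (1:K) := funext hα
  simp only [hu] at hspan hcol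
  rw [ExpProof.expIdeal_eq_span K A α hspan]
  exact ExpProof.hlq_span_GSet K m α hcol
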